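/- Let R be a commutative unital ring and i : (M,F) → (N,F) a morphism of filtered cochain complexes of R-modules which has the left lifting property with respect to every filtered morphism p such that all restrictions F^k p are degreewise surjective. Then i is a filtered weak equivalence — H^n(F^k i) is an isomorphism for all n ∈ ℤ and k ∈ ℕ — and i has the left lifting property with respect to every filtered morphism p such that each restriction F^k p is a degreewise surjective quasi-isomorphism. -/

import Mathlib

open CategoryTheory Limits ZeroObject

noncomputable section

variable (R : Type) [CommRing R]

/-- The category of unbounded cochain complexes of `R`-modules. -/
abbrev Cx := CochainComplex (ModuleCat.{0} R) ℤ



/-- The underlying module of `D_R(n)` in degree `i`: it is (isomorphic to) `R` if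
`i = n` or `i = n+1`, and the zero module otherwise. -/
abbrev diskFun (n i : ℤ) : Type := PLift (i = n ∨ i = n + 1) → R

/-- The differential of the disk complex `D_R(n)`. -/
def diskD (n i j : ℤ) : (diskFun R n i) →ₗ[R] (diskFun R n j) where
  toFun f _ := if hij : i = n ∧ j = n + 1 then f ⟨Or.inl hij.1⟩ else 0
  map_add' f g := by
    funext h
    by_cases hij : i = n ∧ j = n + 1 <;> simp [hij]
  map_smul' r f := by
    funext h
    by_cases hij : i = n ∧ j = n + 1 <;> simp [hij]

lemma diskD_apply (n i j : ℤ) (f : diskFun R n i) (h : PLift (j = n ∨ j = n + 1)) :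
    diskD R n i j f h = if hij : i = n ∧ j = n + 1 then f ⟨Or.inl hij.1⟩ else 0 := rfl

/-- The disk complex `D_R(n)`, with `R` in degrees `n` and `n+1`, the identity as the only
non-trivial differential, and `0` elsewhere. -/
def disk (n : ℤ) : Cx R where
  X i := ModuleCat.of R (diskFun R n i)
  d i j := ModuleCat.ofHom (diskD R n i j)
  shape i j hij := by
    apply ModuleCat.hom_ext
    apply LinearMap.ext
    intro f
    funext h
    have hn : ¬ (i = n ∧ j = n + 1) := by
      rintro ⟨rfl, rfl⟩
      exact hij rfl
    show diskD R n i j f h = _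
    rw [diskD_apply, dif_neg hn]
    rfl
  d_comp_d' i j k _ _ := by
    apply ModuleCat.hom_ext
    apply LinearMap.ext
    intro f
    funext h
    show diskD R n j k (diskD R n i j f) h = _
    rw [diskD_apply]
    split_ifs with hjk
    · rw [diskD_apply]
      have hn : ¬ (i = n ∧ j = n + 1) := by
        obtain ⟨h1, h2⟩ := hjk
        rintro ⟨rfl, h3⟩
        omega
      rw [dif_neg hn]
      rfl
    · rfl

/-- The underlying module of `S_R(n)` in degree `i`. -/
abbrev sphereFun (n i : ℤ) : Type := PLift (i = n) → R

/-- The sphere complex `S_R(n)`, with `R` in degree `n` and `0` elsewhere. -/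
def sphere (n : ℤ) : Cx R where
  X i := ModuleCat.of R (sphereFun R n i)
  d _ _ := 0
  shape _ _ _ := rfl
  d_comp_d' := by intros; simp

/-- The degreewise component of the map `S_R(n+1) ⟶ D_R(n)`. -/
def sphereToDiskHom (n i : ℤ) : (sphereFun R (n + 1) i) →ₗ[R] (diskFun R n i) where
  toFun g _ := if hi : i = n + 1 then g ⟨hi⟩ else 0
  map_add' g₁ g₂ := by
    funext h
    by_cases hi : i = n + 1 <;> simp [hi]
  map_smul' r g := by
    funext h
    by_cases hi : i = n + 1 <;> simp [hi]

lemma sphereToDiskHom_apply (n i : ℤ) (g : sphereFun R (n + 1) i)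
    (h : PLift (i = n ∨ i = n + 1)) :
    sphereToDiskHom R n i g h = if hi : i = n + 1 then g ⟨hi⟩ else 0 := rfl

/-- The map `S_R(n+1) ⟶ D_R(n)` which is the identity of `R` in degree `n+1`. -/
def sphereToDisk (n : ℤ) : sphere R (n + 1) ⟶ disk R n where
  f i := ModuleCat.ofHom (sphereToDiskHom R n i)
  comm' i j _ := by
    apply ModuleCat.hom_ext
    apply LinearMap.ext
    intro g
    funext h
    show diskD R n i j (sphereToDiskHom R n i g) h = sphereToDiskHom R n j ((0 : _ →ₗ[R] _) g) h
    simp only [LinearMap.zero_apply, map_zero, Pi.zero_apply]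
    rw [diskD_apply]
    split_ifs with hij
    · show (if hi : i = n + 1 then (g : sphereFun R (n + 1) i) ⟨hi⟩ else 0) = 0
      have hn : ¬ i = n + 1 := by
        obtain ⟨h1, h2⟩ := hij
        omega
      rw [dif_neg hn]
    · rfl

/-- A map of cochain complexes is degreewise surjective if it is surjective in each degree. -/
def DegSurj {M N : Cx R} (p : M ⟶ N) : Prop := ∀ n : ℤ, Function.Surjective (p.f n)


/-- A filtered cochain complex of `R`-modules: a cochain complex `C` together with a
decreasing `ℕ`-indexed filtration by subcomplexes `C = F⁰C ⊇ F¹C ⊇ F²C ⊇ ⋯`. -/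
structure FCx where
  /-- the underlying cochain complex -/
  C : Cx R
  /-- the filtration, given degreewise by submodules -/
  F : ℕ → ∀ i : ℤ, Submodule R (C.X i)
  /-- the filtration is decreasing -/
  antitone : ∀ p q : ℕ, p ≤ q → ∀ i : ℤ, F q i ≤ F p i
  /-- `F⁰C = C` -/
  zero_top : ∀ i : ℤ, F 0 i = ⊤
  /-- each filtration level is a subcomplex -/
  d_stable : ∀ (p : ℕ) (i j : ℤ), ∀ x ∈ F p i, C.d i j x ∈ F p j

/-- A morphism of filtered cochain complexes: a cochain map preserving the filtrations. -/
@[ext]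
structure FHom (M N : FCx R) where
  /-- the underlying cochain map -/
  φ : M.C ⟶ N.C
  /-- compatibility with the filtrations -/
  preserves : ∀ (p : ℕ) (i : ℤ), ∀ x ∈ M.F p i, φ.f i x ∈ N.F p i

/-- The category of filtered cochain complexes of `R`-modules. -/
instance : Category (FCx R) where
  Hom M N := FHom R M N
  id M := ⟨𝟙 M.C, fun p i x hx => by simpa using hx⟩
  comp f g := ⟨f.φ ≫ g.φ, fun p i x hx => by
    have h1 := f.preserves p i x hx
    have h2 := g.preserves p i _ h1
    simpa using h2⟩
  id_comp f := by apply FHom.ext; simp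
  comp_id f := by apply FHom.ext; simp
  assoc f g h := by apply FHom.ext; simp

@[simp] lemma comp_φ {M N P : FCx R} (f : M ⟶ N) (g : N ⟶ P) :
    (f ≫ g).φ = f.φ ≫ g.φ := rfl

/-- The `p`-th level `F^p M` of the filtration, as a cochain complex. -/
def FCx.level {R : Type} [CommRing R] (M : FCx R) (p : ℕ) : Cx R where
  X i := ModuleCat.of R (M.F p i)
  d i j := ModuleCat.ofHom (LinearMap.restrict (M.C.d i j).hom (fun x hx => M.d_stable p i j x hx))
  shape i j hij := by
    apply ModuleCat.hom_ext
    apply LinearMap.ext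
    intro x
    apply Subtype.ext
    show M.C.d i j x.1 = _
    rw [M.C.shape i j hij]
    rfl
  d_comp_d' i j k _ _ := by
    apply ModuleCat.hom_ext
    apply LinearMap.ext
    intro x
    apply Subtype.ext
    show M.C.d j k (M.C.d i j x.1) = _
    have h0 : M.C.d i j ≫ M.C.d j k = 0 := M.C.d_comp_d i j k
    have h1 : M.C.d j k (M.C.d i j x.1) = (M.C.d i j ≫ M.C.d j k) x.1 := rfl
    rw [h1, h0]
    rfl

/-- The restriction `F^p f : F^p M ⟶ F^p N` of a filtered morphism to the `p`-th filtration
levels. -/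
def levelMap {R : Type} [CommRing R] {M N : FCx R} (f : M ⟶ N) (p : ℕ) :
    M.level p ⟶ N.level p where
  f i := ModuleCat.ofHom (LinearMap.restrict (f.φ.f i).hom (fun x hx => f.preserves p i x hx))
  comm' i j _ := by
    apply ModuleCat.hom_ext
    apply LinearMap.ext
    intro x
    apply Subtype.ext
    show N.C.d i j (f.φ.f i x.1) = f.φ.f j (M.C.d i j x.1)
    have h : (f.φ.f i ≫ N.C.d i j) x.1 = (M.C.d i j ≫ f.φ.f j) x.1 := by
      rw [f.φ.comm i j]
    exact h

/-- A filtered morphism is a (projective) fibration if each `F^p f` is degreewise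
surjective. -/
def FFib {M N : FCx R} (f : M ⟶ N) : Prop :=
  ∀ (p : ℕ) (i : ℤ), Function.Surjective ((levelMap f p).f i)

/-- A filtered morphism is a filtered weak equivalence if each `F^p f` is a
quasi-isomorphism, i.e. `H^n (F^p f)` is an isomorphism for all `n` and `p`. -/
def FWeq {M N : FCx R} (f : M ⟶ N) : Prop :=
  ∀ p : ℕ, QuasiIso (levelMap f p)

/-- The filtered disk `D_R(n,p)`: the complex `D_R(n)` with filtration which is everything
in filtration degrees `k ≤ p` and zero above. -/
def fdisk (n : ℤ) (p : ℕ) : FCx R where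
  C := disk R n
  F k _ := if k ≤ p then ⊤ else ⊥
  antitone a b hab i := by
    by_cases hb : b ≤ p
    · have ha : a ≤ p := le_trans hab hb
      simp [ha, hb]
    · simp [hb]
  zero_top i := by simp
  d_stable k i j x hx := by
    by_cases hk : k ≤ p
    · simp [hk]
    · simp only [if_neg hk, Submodule.mem_bot] at hx ⊢
      rw [hx]
      exact map_zero _

/-- The filtered sphere `S_R(n,p)`. -/
def fsphere (n : ℤ) (p : ℕ) : FCx R where
  C := sphere R n
  F k _ := if k ≤ p then ⊤ else ⊥
  antitone a b hab i := by
    by_cases hb : b ≤ p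
    · have ha : a ≤ p := le_trans hab hb
      simp [ha, hb]
    · simp [hb]
  zero_top i := by simp
  d_stable k i j x hx := by
    by_cases hk : k ≤ p
    · simp [hk]
    · simp only [if_neg hk, Submodule.mem_bot] at hx ⊢
      rw [hx]
      exact map_zero _

/-- The filtered map `S_R(n+1,p) ⟶ D_R(n,p)`. -/
def fsphereToDisk (n : ℤ) (p : ℕ) : fsphere R (n + 1) p ⟶ fdisk R n p where
  φ := sphereToDisk R n
  preserves k i x hx := by
    by_cases hk : k ≤ p
    · show _ ∈ (if k ≤ p then ⊤ else ⊥ : Submodule R ((disk R n).X i))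
      rw [if_pos hk]
      exact Submodule.mem_top
    · show _ ∈ (if k ≤ p then ⊤ else ⊥ : Submodule R ((disk R n).X i))
      rw [if_neg hk]
      replace hx : x = 0 := by
        simp only [fsphere, if_neg hk] at hx
        exact (Submodule.mem_bot R).mp hx
      rw [hx, map_zero]
      exact Submodule.zero_mem _

/-- The zero filtered complex. -/
def fzero : FCx R where
  C := 0
  F _ _ := ⊤
  antitone _ _ _ _ := le_refl _
  zero_top _ := rfl
  d_stable _ _ _ _ _ := Submodule.mem_top

/-- The unique (zero) filtered map from the zero filtered complex. -/
def fromFZero (M : FCx R) : fzero R ⟶ M where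
  φ := 0
  preserves p i x _ := by
    have h : ((0 : (fzero R).C ⟶ M.C).f i) x = 0 := by
      rw [HomologicalComplex.zero_f]
      rfl
    rw [h]
    exact (M.F p i).zero_mem


/-- `f` is a retract of `g` in the arrow category: there are morphisms of arrows
`f → g → f` composing to the identity of `f`. -/
def IsRetractOf {C : Type 1} [Category.{0} C] {X Y X' Y' : C} (f : X ⟶ Y) (g : X' ⟶ Y') : Prop :=
  ∃ (i : Arrow.mk f ⟶ Arrow.mk g) (r : Arrow.mk g ⟶ Arrow.mk f), i ≫ r = 𝟙 (Arrow.mk f)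

/-- A cochain complex `A` is cofibrant if `0 ⟶ A` has the left lifting property with respect
to every degreewise surjective quasi-isomorphism. -/
def Cofibrant (A : Cx R) : Prop :=
  ∀ {X Y : Cx R} (p : X ⟶ Y), (∀ n : ℤ, Function.Surjective (p.f n)) → QuasiIso p →
    HasLiftingProperty (0 : (0 : Cx R) ⟶ A) p

/-- A filtered morphism is a cofibration if it has the left lifting property with respect to
every filtered trivial fibration, i.e. every filtered morphism which is in each filtration
level a degreewise surjective quasi-isomorphism. -/
def FCofib {M N : FCx R} (i : M ⟶ N) : Prop :=
  ∀ {X Y : FCx R} (p : X ⟶ Y), FFib R p → FWeq R p → HasLiftingProperty i p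

/-- A filtered complex `A` is cofibrant if `0 ⟶ A` has the left lifting property with
respect to every filtered trivial fibration. -/
def FCofibrant (A : FCx R) : Prop :=
  ∀ {X Y : FCx R} (p : X ⟶ Y), FFib R p → FWeq R p → HasLiftingProperty (fromFZero R A) p

namespace Statement13Aux

open CategoryTheory Limits

variable {R : Type} [CommRing R]

/-! ### cast maps -/

def castMap (C : Cx R) {a b : ℤ} (h : a = b) : C.X a →ₗ[R] C.X b :=
  h ▸ (LinearMap.id : C.X a →ₗ[R] C.X a)

lemma castMap_self (C : Cx R) {a : ℤ} (h : a = a) (x : C.X a) : castMap C h x = x := by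
  rw [Subsingleton.elim h rfl]; rfl

lemma d_castMap (C : Cx R) {a b b' : ℤ} (h : b = b') (x : C.X a) :
    castMap C h (C.d a b x) = C.d a b' x := by subst h; rfl

lemma castMap_d (C : Cx R) {a a' b : ℤ} (h : a = a') (x : C.X a) :
    C.d a' b (castMap C h x) = C.d a b x := by subst h; rfl

lemma castMap_castMap (C : Cx R) {a b c : ℤ} (h : a = b) (h' : b = c) (x : C.X a) :
    castMap C h' (castMap C h x) = castMap C (h.trans h') x := by subst h h'; rfl

lemma castMap_mem (M : FCx R) {a b : ℤ} (h : a = b) {p : ℕ} {x : M.C.X a}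
    (hx : x ∈ M.F p a) : castMap M.C h x ∈ M.F p b := by subst h; exact hx

lemma castMap_level_coe (M : FCx R) (p : ℕ) {a b : ℤ} (h : a = b) (x : (M.level p).X a) :
    (castMap (M.level p) h x).1 = castMap M.C h x.1 := by subst h; rfl

lemma d_d (C : Cx R) (a b c : ℤ) (x : C.X a) : C.d b c (C.d a b x) = 0 := by
  have : (C.d a b ≫ C.d b c) x = (0 : C.X a ⟶ C.X c) x := by rw [C.d_comp_d]
  exact this

lemma hom_comm_apply {A B : Cx R} (f : A ⟶ B) (a b : ℤ) (x : A.X a) :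
    B.d a b (f.f a x) = f.f b (A.d a b x) := by
  have : (f.f a ≫ B.d a b) x = (A.d a b ≫ f.f b) x := by rw [f.comm]
  exact this

/-! ### levelMap lemmas -/

lemma levelMap_f_coe {M N : FCx R} (f : M ⟶ N) (p : ℕ) (n : ℤ) (x : (M.level p).X n) :
    ((levelMap f p).f n x).1 = f.φ.f n x.1 := rfl

lemma level_d_coe (M : FCx R) (p : ℕ) (a b : ℤ) (x : (M.level p).X a) :
    ((M.level p).d a b x).1 = M.C.d a b x.1 := rfl

lemma levelMap_id (M : FCx R) (p : ℕ) : levelMap (𝟙 M) p = 𝟙 (M.level p) := by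
  apply HomologicalComplex.hom_ext
  intro n
  apply ModuleCat.hom_ext
  apply LinearMap.ext
  intro x
  apply Subtype.ext
  rfl

lemma comp_φ_f_apply {A B C : FCx R} (f : A ⟶ B) (g : B ⟶ C) (n : ℤ) (x : A.C.X n) :
    (f ≫ g).φ.f n x = g.φ.f n (f.φ.f n x) := rfl

lemma levelMap_comp {A B C : FCx R} (f : A ⟶ B) (g : B ⟶ C) (p : ℕ) :
    levelMap (f ≫ g) p = levelMap f p ≫ levelMap g p := by
  apply HomologicalComplex.hom_ext
  intro n
  apply ModuleCat.hom_ext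
  apply LinearMap.ext
  intro x
  apply Subtype.ext
  rfl

lemma fhom_ext {A B : FCx R} {f g : A ⟶ B} (hh : ∀ n x, f.φ.f n x = g.φ.f n x) : f = g := by
  apply FHom.ext
  apply HomologicalComplex.hom_ext
  intro n
  exact ModuleCat.hom_ext (LinearMap.ext (hh n))

/-! ### the point -/

def fpt : FCx R where
  C := { X := fun _ => ModuleCat.of R PUnit
         d := fun _ _ => 0
         shape := fun _ _ _ => rfl
         d_comp_d' := fun _ _ _ _ _ => rfl }
  F _ _ := ⊤
  antitone _ _ _ _ := le_rfl
  zero_top _ := rfl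
  d_stable _ _ _ _ _ := trivial

def toFpt (M : FCx R) : M ⟶ fpt where
  φ := { f := fun _ => 0
         comm' := fun _ _ _ => rfl }
  preserves _ _ _ _ := trivial

lemma ffib_toFpt (M : FCx R) : FFib R (toFpt M) := by
  intro p n y
  exact ⟨0, Subtype.ext (Subsingleton.elim (α := PUnit.{1}) _ _)⟩

/-! ### binary product -/

def fprod (N : FCx R) : FCx R where
  C := { X := fun n => ModuleCat.of R (N.C.X n × N.C.X n)
         d := fun a b => ModuleCat.ofHom ((N.C.d a b).hom.prodMap (N.C.d a b).hom)
         shape := fun a b hab => by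
            apply ModuleCat.hom_ext; apply LinearMap.ext; intro v
            have h0 : N.C.d a b = 0 := N.C.shape a b hab
            show ((N.C.d a b) v.1, (N.C.d a b) v.2) = (0 : N.C.X b × N.C.X b)
            rw [h0]
            rfl
         d_comp_d' := fun a b c _ _ => by
            apply ModuleCat.hom_ext; apply LinearMap.ext; intro v
            show ((N.C.d b c) ((N.C.d a b) v.1), (N.C.d b c) ((N.C.d a b) v.2))
              = (0 : N.C.X c × N.C.X c)
            rw [d_d, d_d]
            rfl }
  F p n := (N.F p n).prod (N.F p n)
  antitone p q hpq n := Submodule.prod_mono (N.antitone p q hpq n) (N.antitone p q hpq n)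
  zero_top n := by
    show (N.F 0 n).prod (N.F 0 n) = ⊤
    rw [N.zero_top]; exact Submodule.prod_top
  d_stable p a b v hv := by
    obtain ⟨h1, h2⟩ := Submodule.mem_prod.mp hv
    exact Submodule.mem_prod.mpr ⟨N.d_stable p a b _ h1, N.d_stable p a b _ h2⟩

def fprodLift {A N : FCx R} (f g : A ⟶ N) : A ⟶ fprod N where
  φ := { f := fun n => ModuleCat.ofHom (LinearMap.prod (f.φ.f n).hom (g.φ.f n).hom)
         comm' := fun a b _ => by
            apply ModuleCat.hom_ext; apply LinearMap.ext; intro x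
            show ((N.C.d a b) (f.φ.f a x), (N.C.d a b) (g.φ.f a x)) = _
            rw [hom_comm_apply, hom_comm_apply]
            rfl }
  preserves p n x hx :=
    Submodule.mem_prod.mpr ⟨f.preserves p n x hx, g.preserves p n x hx⟩

/-! ### path object -/

def pathD (C : Cx R) (a b : ℤ) :
    (C.X a × C.X a × C.X (a - 1)) →ₗ[R] (C.X b × C.X b × C.X (b - 1)) where
  toFun v := (C.d a b v.1, C.d a b v.2.1,
    (if hb : b = a + 1 then castMap C (by omega : a = b - 1) (v.1 - v.2.1) else 0)
      - C.d (a - 1) (b - 1) v.2.2)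
  map_add' v w := by
    by_cases hb : b = a + 1 <;>
      simp [hb, Prod.ext_iff, map_add, map_sub] <;> abel
  map_smul' r v := by
    by_cases hb : b = a + 1 <;>
      simp [hb, Prod.ext_iff, map_smul, smul_sub]

lemma pathD_apply (C : Cx R) (a b : ℤ) (v : C.X a × C.X a × C.X (a - 1)) :
    pathD C a b v = (C.d a b v.1, C.d a b v.2.1,
      (if hb : b = a + 1 then castMap C (by omega : a = b - 1) (v.1 - v.2.1) else 0)
        - C.d (a - 1) (b - 1) v.2.2) := rfl

def pathCx (C : Cx R) : Cx R where
  X a := ModuleCat.of R (C.X a × C.X a × C.X (a - 1))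
  d a b := ModuleCat.ofHom (pathD C a b)
  shape a b hab := by
    apply ModuleCat.hom_ext; apply LinearMap.ext; intro v
    show pathD C a b v = 0
    have hb : ¬ b = a + 1 := fun hh => hab (show (ComplexShape.up ℤ).Rel a b by
      simp only [ComplexShape.up_Rel]; omega)
    have h0 : C.d a b = 0 := C.shape a b hab
    have h1 : C.d (a - 1) (b - 1) = 0 := C.shape _ _ (fun hh => hab (show (ComplexShape.up ℤ).Rel a b by
      simp only [ComplexShape.up_Rel] at hh ⊢; omega))
    rw [pathD_apply, dif_neg hb, h0, h1]
    show ((0 : C.X a →ₗ[R] C.X b) v.1, (0 : C.X a →ₗ[R] C.X b) v.2.1,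
      (0 : C.X (b-1)) - (0 : C.X (a-1) →ₗ[R] C.X (b-1)) v.2.2) = 0
    simp
  d_comp_d' a b c hab hbc := by
    apply ModuleCat.hom_ext; apply LinearMap.ext; intro v
    show pathD C b c (pathD C a b v) = 0
    have hab' : b = a + 1 := by
      have := hab; simp only [ComplexShape.up_Rel] at this; omega
    have hbc' : c = b + 1 := by
      have := hbc; simp only [ComplexShape.up_Rel] at this; omega
    rw [pathD_apply, pathD_apply, dif_pos hab', dif_pos hbc']
    refine Prod.ext ?_ (Prod.ext ?_ ?_)
    · exact d_d C a b c v.1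
    · exact d_d C a b c v.2.1
    · show castMap C _ (C.d a b v.1 - C.d a b v.2.1)
        - C.d (b-1) (c-1) (castMap C _ (v.1 - v.2.1) - C.d (a-1) (b-1) v.2.2) = 0
      rw [map_sub, map_sub (C.d (b-1) (c-1)).hom]
      rw [d_castMap, d_castMap, castMap_d, d_d]
      rw [map_sub]
      abel

def fpath (N : FCx R) : FCx R where
  C := pathCx N.C
  F p n := (N.F p n).prod ((N.F p n).prod (N.F p (n - 1)))
  antitone p q hpq n := Submodule.prod_mono (N.antitone p q hpq n)
    (Submodule.prod_mono (N.antitone p q hpq n) (N.antitone p q hpq (n - 1)))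
  zero_top n := by
    show (N.F 0 n).prod ((N.F 0 n).prod (N.F 0 (n-1))) = ⊤
    rw [N.zero_top, N.zero_top, Submodule.prod_top, Submodule.prod_top]
  d_stable p a b v hv := by
    obtain ⟨h1, hv2⟩ := Submodule.mem_prod.mp hv
    obtain ⟨h2, h3⟩ := Submodule.mem_prod.mp hv2
    show pathD N.C a b (id v : N.C.X a × N.C.X a × N.C.X (a-1)) ∈ (N.F p b).prod ((N.F p b).prod (N.F p (b-1)))
    rw [pathD_apply, Submodule.mem_prod]
    refine ⟨N.d_stable p a b _ h1, ?_⟩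
    rw [Submodule.mem_prod]
    refine ⟨N.d_stable p a b _ h2, Submodule.sub_mem _ ?_ (N.d_stable p (a-1) (b-1) _ h3)⟩
    by_cases hb : b = a + 1
    · rw [dif_pos hb]
      exact castMap_mem N _ (Submodule.sub_mem _ h1 h2)
    · rw [dif_neg hb]
      exact Submodule.zero_mem _

/-- evaluation at the two endpoints -/
def fpathEv (N : FCx R) : fpath N ⟶ fprod N where
  φ := { f := fun n => ModuleCat.ofHom (LinearMap.prod (LinearMap.fst R _ _)
            ((LinearMap.fst R _ _).comp (LinearMap.snd R _ _)))
         comm' := fun a b _ => by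
            apply ModuleCat.hom_ext; apply LinearMap.ext; intro v
            rfl }
  preserves p n v hv := by
    obtain ⟨h1, hv2⟩ := Submodule.mem_prod.mp hv
    exact Submodule.mem_prod.mpr ⟨h1, (Submodule.mem_prod.mp hv2).1⟩

lemma ffib_fpathEv (N : FCx R) : FFib R (fpathEv N) := by
  intro p n y
  obtain ⟨hy1, hy2⟩ := Submodule.mem_prod.mp y.2
  refine ⟨⟨(y.1.1, y.1.2, 0), Submodule.mem_prod.mpr ⟨hy1,
    Submodule.mem_prod.mpr ⟨hy2, Submodule.zero_mem _⟩⟩⟩, Subtype.ext rfl⟩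

/-- the constant path -/
def fpathConst (N : FCx R) : N ⟶ fpath N where
  φ := { f := fun n => ModuleCat.ofHom (LinearMap.prod LinearMap.id (LinearMap.prod LinearMap.id 0))
         comm' := fun a b _ => by
            apply ModuleCat.hom_ext; apply LinearMap.ext; intro x
            show pathD N.C a b (x, x, 0) = (N.C.d a b x, N.C.d a b x, 0)
            rw [pathD_apply]
            refine Prod.ext rfl (Prod.ext rfl ?_)
            show (if hb : b = a + 1 then castMap N.C _ (x - x) else 0)
              - N.C.d (a-1) (b-1) 0 = 0
            rw [map_zero, sub_zero]
            by_cases hb : b = a + 1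
            · rw [dif_pos hb, sub_self, map_zero]
            · rw [dif_neg hb] }
  preserves p n x hx :=
    Submodule.mem_prod.mpr ⟨hx, Submodule.mem_prod.mpr ⟨hx, Submodule.zero_mem _⟩⟩


lemma pathD_snd_snd (C : Cx R) (a : ℤ) (v : C.X a × C.X a × C.X (a - 1)) :
    (pathD C a (a + 1) v).2.2
      = castMap C (by omega : a = (a + 1) - 1) (v.1 - v.2.1)
        - C.d (a - 1) ((a + 1) - 1) v.2.2 := by
  rw [pathD_apply, dif_pos rfl]

def HHmap {N : FCx R} (L : N ⟶ fpath N) (p : ℕ)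
    (memH : ∀ (n : ℤ) (x : (N.level p).X n), (L.φ.f n x.1).2.2 ∈ N.F p (n-1)) (a : ℤ) :
    (N.level p).X a →ₗ[R] (N.level p).X (a - 1) where
  toFun x := ⟨(L.φ.f a x.1).2.2, memH a x⟩
  map_add' x y := Subtype.ext (by
    show (L.φ.f a (x.1 + y.1)).2.2 = (L.φ.f a x.1).2.2 + (L.φ.f a y.1).2.2
    rw [map_add]; rfl)
  map_smul' c x := Subtype.ext (by
    show (L.φ.f a (c • x.1)).2.2 = c • (L.φ.f a x.1).2.2
    rw [map_smul]; rfl)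

def homotopy_of_path {N : FCx R} (g : N ⟶ N) (L : N ⟶ fpath N)
    (hL : L ≫ fpathEv N = fprodLift (𝟙 N) g) (p : ℕ) :
    Homotopy (𝟙 (N.level p)) (levelMap g p) := by
  have hL1 : ∀ (n : ℤ) (x : N.C.X n), (L.φ.f n x).1 = x := fun n x =>
    congrArg (fun (v : ↑(N.C.X n) × ↑(N.C.X n)) => v.1)
      (congrArg (fun (f : N ⟶ fprod N) => f.φ.f n x) hL)
  have hLg : ∀ (n : ℤ) (x : N.C.X n), (L.φ.f n x).2.1 = g.φ.f n x := fun n x =>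
    congrArg (fun (v : ↑(N.C.X n) × ↑(N.C.X n)) => v.2)
      (congrArg (fun (f : N ⟶ fprod N) => f.φ.f n x) hL)
  have key : ∀ (n : ℤ) (x : N.C.X n),
      castMap N.C (by omega : n = (n+1) - 1) (x - g.φ.f n x)
        - N.C.d (n-1) ((n+1)-1) ((L.φ.f n x).2.2)
      = (L.φ.f (n+1) (N.C.d n (n+1) x)).2.2 := by
    intro n x
    have hc := hom_comm_apply L.φ n (n+1) x
    have h3 : (pathD N.C n (n+1) (id (L.φ.f n x) : N.C.X n × N.C.X n × N.C.X (n-1))).2.2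
        = (L.φ.f (n+1) (N.C.d n (n+1) x)).2.2 := congrArg (fun v => v.2.2) hc
    rw [pathD_snd_snd] at h3
    have e1 : (id (L.φ.f n x) : N.C.X n × N.C.X n × N.C.X (n-1)).1 = x := hL1 n x
    have e2 : (id (L.φ.f n x) : N.C.X n × N.C.X n × N.C.X (n-1)).2.1 = g.φ.f n x := hLg n x
    rw [e1, e2] at h3
    exact h3
  have memH : ∀ (n : ℤ) (x : (N.level p).X n), (L.φ.f n x.1).2.2 ∈ N.F p (n-1) := by
    intro n x
    have hm := L.preserves p n x.1 x.2
    exact (Submodule.mem_prod.mp (Submodule.mem_prod.mp hm).2).2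
  refine
    { hom := fun a b => if hh : b = a - 1 then
        @ModuleCat.ofHom R _ (↑((N.level p).X a)) (↑((N.level p).X b)) _ ((N.level p).X a).isModule _
          ((N.level p).X b).isModule ((castMap (N.level p) (show a - 1 = b from hh.symm)).comp (HHmap L p memH a)) else 0
      zero := fun a b hab => by
        beta_reduce
        rw [dif_neg]
        intro hh
        exact hab (show (ComplexShape.up ℤ).Rel b a by
          simp only [ComplexShape.up_Rel]; omega)
      comm := fun n => by
        rw [dNext_eq _ (show (ComplexShape.up ℤ).Rel n (n+1) by
              simp only [ComplexShape.up_Rel]),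
            prevD_eq _ (show (ComplexShape.up ℤ).Rel (n-1) n by
              simp only [ComplexShape.up_Rel]; omega)]
        rw [dif_pos (show n = (n+1) - 1 by omega), dif_pos rfl]
        apply ModuleCat.hom_ext
        apply LinearMap.ext
        intro x
        apply Subtype.ext
        show x.1 = (castMap (N.level p) (show (n+1) - 1 = n by omega)
              (HHmap L p memH (n+1) ((N.level p).d n (n+1) x))).1
          + ((N.level p).d (n-1) n (castMap (N.level p)
              (show n - 1 = n - 1 by omega) (HHmap L p memH n x))).1
          + ((levelMap g p).f n x).1
        rw [castMap_level_coe, castMap_self]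
        show x.1 = castMap N.C (show (n+1) - 1 = n by omega)
              ((L.φ.f (n+1) (N.C.d n (n+1) x.1)).2.2)
          + N.C.d (n-1) n ((L.φ.f n x.1).2.2)
          + g.φ.f n x.1
        have hcast := congrArg (castMap N.C (show (n+1) - 1 = n by omega)) (key n x.1)
        rw [map_sub, castMap_castMap, castMap_self, d_castMap] at hcast
        rw [← hcast]
        abel }

end Statement13Aux

theorem statement_13 {M N : FCx R} (i : M ⟶ N)
    (h : ∀ {X Y : FCx R} (p : X ⟶ Y), FFib R p → HasLiftingProperty i p) :
    FWeq R i ∧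
      (∀ {X Y : FCx R} (p : X ⟶ Y), FFib R p → FWeq R p → HasLiftingProperty i p) := by
  refine ⟨?_, fun p hp _ => h p hp⟩
  -- obtain a retraction r of i
  obtain ⟨r, hr⟩ : ∃ r : N ⟶ M, i ≫ r = 𝟙 M := by
    haveI := h (Statement13Aux.toFpt M) (Statement13Aux.ffib_toFpt M)
    have sq : CommSq (𝟙 M) i (Statement13Aux.toFpt M) (Statement13Aux.toFpt N) :=
      ⟨Statement13Aux.fhom_ext (fun n x => Subsingleton.elim (α := PUnit.{1}) _ _)⟩
    exact ⟨sq.lift, sq.fac_left⟩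
  -- obtain a filtered homotopy 𝟙 N ∼ r ≫ i via the path object
  haveI := h (Statement13Aux.fpathEv N) (Statement13Aux.ffib_fpathEv N)
  have sq2 : CommSq (i ≫ Statement13Aux.fpathConst N) i (Statement13Aux.fpathEv N)
      (Statement13Aux.fprodLift (𝟙 N) (r ≫ i)) := by
    constructor
    apply Statement13Aux.fhom_ext
    intro n x
    have hx : r.φ.f n (i.φ.f n x) = x :=
      congrArg (fun (f : M ⟶ M) => f.φ.f n x) hr
    show (i.φ.f n x, i.φ.f n x) = (i.φ.f n x, i.φ.f n (r.φ.f n (i.φ.f n x)))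
    rw [hx]
  intro p
  have ht : Homotopy (𝟙 (N.level p)) (levelMap (r ≫ i) p) :=
    Statement13Aux.homotopy_of_path (r ≫ i) sq2.lift sq2.fac_right p
  suffices hq : ∀ (e : HomotopyEquiv (M.level p) (N.level p)),
      e.hom = levelMap i p → QuasiIso (levelMap i p) by
    exact hq
      { hom := levelMap i p
        inv := levelMap r p
        homotopyHomInvId := Homotopy.ofEq (by
          rw [← Statement13Aux.levelMap_comp, hr, Statement13Aux.levelMap_id])
        homotopyInvHomId := (Homotopy.ofEq
          (Statement13Aux.levelMap_comp r i p).symm).trans ht.symm } rfl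
  intro e he
  rw [← he]
  infer_instance

end
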